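/- Amalgamation of n-elementary and elementary extensions: if A ⪯ₙ B (A is an n-elementary substructure of B) and A ⪯ A′ (an elementary extension), then there exists a structure B′ with an elementary embedding of B into B′ and an n-elementary embedding of A′ into B′ compatible with the inclusions of A. -/

import Mathlib

open FirstOrder

universe u

namespace InfinitaryForcing

variable (L : FirstOrder.Language.{u, u})

/-- Infinitary formulas of `L_{∞,ω}`: set-indexed conjunctions and disjunctions,
finitary quantification, free variables among `Fin n`. -/
inductive InfForm : ℕ → Type (u + 1)
  | equal {n : ℕ} (t₁ t₂ : L.Term (Fin n)) : InfForm n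
  | rel {n l : ℕ} (R : L.Relations l) (ts : Fin l → L.Term (Fin n)) : InfForm n
  | not {n : ℕ} (φ : InfForm n) : InfForm n
  | disj {n : ℕ} {ι : Type u} (Φ : ι → InfForm n) : InfForm n
  | conj {n : ℕ} {ι : Type u} (Φ : ι → InfForm n) : InfForm n
  | ex {n : ℕ} (φ : InfForm (n + 1)) : InfForm n
  | all {n : ℕ} (φ : InfForm (n + 1)) : InfForm n

variable {L}

/-- Tarskian satisfaction for infinitary formulas. -/
def Realize : ∀ {n : ℕ}, InfForm L n → ∀ (M : Type u), L.Structure M → (Fin n → M) → Prop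
  | _, .equal t₁ t₂, _M, S, v => letI := S; t₁.realize v = t₂.realize v
  | _, .rel R ts, _M, S, v => letI := S; Language.Structure.RelMap R fun i => (ts i).realize v
  | _, .not φ, M, S, v => ¬ Realize φ M S v
  | _, .disj Φ, M, S, v => ∃ i, Realize (Φ i) M S v
  | _, .conj Φ, M, S, v => ∀ i, Realize (Φ i) M S v
  | _, .ex φ, M, S, v => ∃ b : M, Realize φ M S (Fin.snoc v b)
  | _, .all φ, M, S, v => ∀ b : M, Realize φ M S (Fin.snoc v b)

/-- Elementary embeddings, with the structures made explicit. -/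
abbrev ElemEmb (M N : Type u) (SM : L.Structure M) (SN : L.Structure N) : Type u :=
  @FirstOrder.Language.ElementaryEmbedding L M N SM SN

/-- The strong forcing relation `A ⊩ ψ(ā)`, where conditions are structures
ordered by elementary extension. -/
def Forces : ∀ {n : ℕ}, InfForm L n → ∀ (M : Type u), L.Structure M → (Fin n → M) → Prop
  | _, .equal t₁ t₂, _M, S, v => letI := S; t₁.realize v = t₂.realize v
  | _, .rel R ts, _M, S, v => letI := S; Language.Structure.RelMap R fun i => (ts i).realize v
  | _, .not φ, M, S, v =>
      ∀ (N : Type u) (SN : L.Structure N) (f : ElemEmb M N S SN),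
        ¬ Forces φ N SN (fun i => f.toFun (v i))
  | _, .disj Φ, M, S, v => ∃ i, Forces (Φ i) M S v
  | _, .conj Φ, M, S, v =>
      ∀ (N : Type u) (SN : L.Structure N) (f : ElemEmb M N S SN) (i : _),
        ∃ (P : Type u) (SP : L.Structure P) (g : ElemEmb N P SN SP),
          Forces (Φ i) P SP (fun k => g.toFun (f.toFun (v k)))
  | _, .ex φ, M, S, v => ∃ b : M, Forces φ M S (Fin.snoc v b)
  | _, .all φ, M, S, v =>
      ∀ (N : Type u) (SN : L.Structure N) (f : ElemEmb M N S SN) (b : N),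
        ∃ (P : Type u) (SP : L.Structure P) (g : ElemEmb N P SN SP),
          Forces φ P SP (Fin.snoc (fun k => g.toFun (f.toFun (v k))) (g.toFun b))

/-- `M` decides `ψ(v)` if it strongly forces `ψ(v)` or `¬ψ(v)`. -/
def Decides {n : ℕ} (ψ : InfForm L n) (M : Type u) (S : L.Structure M) (v : Fin n → M) : Prop :=
  Forces ψ M S v ∨ Forces ψ.not M S v

/-- The weak forcing relation `A ⊩* ψ := A ⊩ ¬¬ψ`. -/
def WForces {n : ℕ} (ψ : InfForm L n) (M : Type u) (S : L.Structure M) (v : Fin n → M) : Prop :=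
  Forces ψ.not.not M S v

variable (L)

/-- Finitary (`L_{ω,ω}`) formulas among the infinitary ones. -/
inductive InfForm.IsFinitary : ∀ {n : ℕ}, InfForm L n → Prop
  | equal {n} (t₁ t₂ : L.Term (Fin n)) : IsFinitary (.equal t₁ t₂)
  | rel {n l} (R : L.Relations l) (ts : Fin l → L.Term (Fin n)) : IsFinitary (.rel R ts)
  | not {n} {φ : InfForm L n} : IsFinitary φ → IsFinitary φ.not
  | disj {n} {ι : Type u} (_ : Finite ι) {Φ : ι → InfForm L n} :
      (∀ i, IsFinitary (Φ i)) → IsFinitary (.disj Φ)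
  | conj {n} {ι : Type u} (_ : Finite ι) {Φ : ι → InfForm L n} :
      (∀ i, IsFinitary (Φ i)) → IsFinitary (.conj Φ)
  | ex {n} {φ : InfForm L (n + 1)} : IsFinitary φ → IsFinitary φ.ex
  | all {n} {φ : InfForm L (n + 1)} : IsFinitary φ → IsFinitary φ.all

/-- Quantifier-free infinitary formulas. -/
inductive InfForm.IsQF : ∀ {n : ℕ}, InfForm L n → Prop
  | equal {n} (t₁ t₂ : L.Term (Fin n)) : IsQF (.equal t₁ t₂)
  | rel {n l} (R : L.Relations l) (ts : Fin l → L.Term (Fin n)) : IsQF (.rel R ts)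
  | not {n} {φ : InfForm L n} : IsQF φ → IsQF φ.not
  | disj {n} {ι : Type u} {Φ : ι → InfForm L n} : (∀ i, IsQF (Φ i)) → IsQF (.disj Φ)
  | conj {n} {ι : Type u} {Φ : ι → InfForm L n} : (∀ i, IsQF (Φ i)) → IsQF (.conj Φ)

/-- `L_{ω₁,ω}` formulas: all conjunctions and disjunctions are countable. -/
inductive InfForm.IsCtble : ∀ {n : ℕ}, InfForm L n → Prop
  | equal {n} (t₁ t₂ : L.Term (Fin n)) : IsCtble (.equal t₁ t₂)
  | rel {n l} (R : L.Relations l) (ts : Fin l → L.Term (Fin n)) : IsCtble (.rel R ts)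
  | not {n} {φ : InfForm L n} : IsCtble φ → IsCtble φ.not
  | disj {n} {ι : Type u} (_ : Countable ι) {Φ : ι → InfForm L n} :
      (∀ i, IsCtble (Φ i)) → IsCtble (.disj Φ)
  | conj {n} {ι : Type u} (_ : Countable ι) {Φ : ι → InfForm L n} :
      (∀ i, IsCtble (Φ i)) → IsCtble (.conj Φ)
  | ex {n} {φ : InfForm L (n + 1)} : IsCtble φ → IsCtble φ.ex
  | all {n} {φ : InfForm L (n + 1)} : IsCtble φ → IsCtble φ.all

/-- A fragment of `L_{∞,ω}`: a family of sets of formulas closed under negation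
and subformulas. -/
structure IsFragment (𝔸 : ∀ n : ℕ, Set (InfForm L n)) : Prop where
  not_mem : ∀ {n} {φ : InfForm L n}, φ ∈ 𝔸 n → φ.not ∈ 𝔸 n
  of_not : ∀ {n} {φ : InfForm L n}, φ.not ∈ 𝔸 n → φ ∈ 𝔸 n
  of_disj : ∀ {n} {ι : Type u} {Φ : ι → InfForm L n}, InfForm.disj Φ ∈ 𝔸 n → ∀ i, Φ i ∈ 𝔸 n
  of_conj : ∀ {n} {ι : Type u} {Φ : ι → InfForm L n}, InfForm.conj Φ ∈ 𝔸 n → ∀ i, Φ i ∈ 𝔸 n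
  of_ex : ∀ {n} {φ : InfForm L (n + 1)}, φ.ex ∈ 𝔸 n → φ ∈ 𝔸 (n + 1)
  of_all : ∀ {n} {φ : InfForm L (n + 1)}, φ.all ∈ 𝔸 n → φ ∈ 𝔸 (n + 1)

variable {L}

/-- `G` is `𝔸`-generic if it decides every instance of every formula of `𝔸`. -/
def IsGeneric (𝔸 : ∀ n : ℕ, Set (InfForm L n)) (G : Type u) (SG : L.Structure G) : Prop :=
  ∀ (n : ℕ) (ψ : InfForm L n), ψ ∈ 𝔸 n → ∀ v : Fin n → G, Decides ψ G SG v

variable (L)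

mutual
  /-- Finitary `∃ₙ` formulas: `n` alternating blocks of quantifiers beginning
  with existentials, counting finite conjunctions/disjunctions as free. -/
  inductive IsEx : ℕ → ∀ {k : ℕ}, InfForm L k → Prop
    | equal {m k} (t₁ t₂ : L.Term (Fin k)) : IsEx m (.equal t₁ t₂)
    | rel {m k l} (R : L.Relations l) (ts : Fin l → L.Term (Fin k)) : IsEx m (.rel R ts)
    | not {m k} {φ : InfForm L k} : IsAll m φ → IsEx m φ.not
    | disj {m k} {ι : Type u} (_ : Finite ι) {Φ : ι → InfForm L k} :
        (∀ i, IsEx m (Φ i)) → IsEx m (.disj Φ)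
    | conj {m k} {ι : Type u} (_ : Finite ι) {Φ : ι → InfForm L k} :
        (∀ i, IsEx m (Φ i)) → IsEx m (.conj Φ)
    | ex {m k} {φ : InfForm L (k + 1)} : IsEx m φ → 1 ≤ m → IsEx m φ.ex
    | exStep {m k} {φ : InfForm L (k + 1)} : IsAll m φ → IsEx (m + 1) φ.ex

  /-- Finitary `∀ₙ` formulas. -/
  inductive IsAll : ℕ → ∀ {k : ℕ}, InfForm L k → Prop
    | equal {m k} (t₁ t₂ : L.Term (Fin k)) : IsAll m (.equal t₁ t₂)
    | rel {m k l} (R : L.Relations l) (ts : Fin l → L.Term (Fin k)) : IsAll m (.rel R ts)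
    | not {m k} {φ : InfForm L k} : IsEx m φ → IsAll m φ.not
    | disj {m k} {ι : Type u} (_ : Finite ι) {Φ : ι → InfForm L k} :
        (∀ i, IsAll m (Φ i)) → IsAll m (.disj Φ)
    | conj {m k} {ι : Type u} (_ : Finite ι) {Φ : ι → InfForm L k} :
        (∀ i, IsAll m (Φ i)) → IsAll m (.conj Φ)
    | all {m k} {φ : InfForm L (k + 1)} : IsAll m φ → 1 ≤ m → IsAll m φ.all
    | allStep {m k} {φ : InfForm L (k + 1)} : IsEx m φ → IsAll (m + 1) φ.all
end

/-- `f : A → B` is an `n`-elementary map (`A ⪯ₙ B` when `f` is an inclusion):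
every finitary `∃ₙ` or `∀ₙ` formula transfers along `f`. -/
def IsNElemMap (n : ℕ) {A B : Type u} (SA : L.Structure A) (SB : L.Structure B)
    (f : A → B) : Prop :=
  ∀ (k : ℕ) (φ : InfForm L k), (IsEx L n φ ∨ IsAll L n φ) →
    ∀ v : Fin k → A, Realize φ A SA v ↔ Realize φ B SB (fun i => f (v i))

/-- `f : A → B` is an elementary map: every finitary formula transfers along `f`. -/
def IsElemMap {A B : Type u} (SA : L.Structure A) (SB : L.Structure B)
    (f : A → B) : Prop :=
  ∀ (k : ℕ) (φ : InfForm L k), InfForm.IsFinitary L φ →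
    ∀ v : Fin k → A, Realize φ A SA v ↔ Realize φ B SB (fun i => f (v i))


/-! ### Auxiliary infrastructure for the amalgamation theorem -/

section Amalgam

open FirstOrder Language

variable {L}

/-- Relabelling of free variables of infinitary formulas. -/
def InfForm.relabel : ∀ {k m : ℕ}, (Fin k → Fin m) → InfForm L k → InfForm L m
  | _, _, f, .equal t₁ t₂ => .equal (t₁.relabel f) (t₂.relabel f)
  | _, _, f, .rel R ts => .rel R fun l => (ts l).relabel f
  | _, _, f, .not φ => .not (φ.relabel f)
  | _, _, f, .disj Φ => .disj fun l => (Φ l).relabel f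
  | _, _, f, .conj Φ => .conj fun l => (Φ l).relabel f
  | _, m, f, .ex φ => .ex (φ.relabel (Fin.snoc (Fin.castSucc ∘ f) (Fin.last m)))
  | _, m, f, .all φ => .all (φ.relabel (Fin.snoc (Fin.castSucc ∘ f) (Fin.last m)))

theorem snoc_comp_snoc_castSucc {k m : ℕ} (f : Fin k → Fin m) {M : Type u} (v : Fin m → M)
    (b : M) :
    (Fin.snoc v b) ∘ (Fin.snoc (Fin.castSucc ∘ f) (Fin.last m) : Fin (k+1) → Fin (m+1)) =
      Fin.snoc (v ∘ f) b := by
  funext x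
  refine Fin.lastCases ?_ (fun y => ?_) x
  · simp [Fin.snoc_last]
  · simp [Fin.snoc_castSucc, Function.comp]

theorem realize_relabel' : ∀ {k m : ℕ} (f : Fin k → Fin m) (φ : InfForm L k) (M : Type u)
    (S : L.Structure M) (v : Fin m → M),
    Realize (φ.relabel f) M S v ↔ Realize φ M S (v ∘ f)
  | _, _, f, .equal t₁ t₂, M, S, v => by
      simp [InfForm.relabel, Realize, Term.realize_relabel]
  | _, _, f, .rel R ts, M, S, v => by
      simp [InfForm.relabel, Realize, Term.realize_relabel]
  | _, _, f, .not φ, M, S, v => by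
      simp only [InfForm.relabel, Realize]
      rw [realize_relabel' f φ M S v]
  | _, _, f, .disj Φ, M, S, v => by
      simp only [InfForm.relabel, Realize]
      exact exists_congr fun l => realize_relabel' f (Φ l) M S v
  | _, _, f, .conj Φ, M, S, v => by
      simp only [InfForm.relabel, Realize]
      exact forall_congr' fun l => realize_relabel' f (Φ l) M S v
  | _, _, f, .ex φ, M, S, v => by
      simp only [InfForm.relabel, Realize]
      refine exists_congr fun b => ?_
      rw [realize_relabel' _ φ M S (Fin.snoc v b), snoc_comp_snoc_castSucc]
  | _, _, f, .all φ, M, S, v => by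
      simp only [InfForm.relabel, Realize]
      refine forall_congr' fun b => ?_
      rw [realize_relabel' _ φ M S (Fin.snoc v b), snoc_comp_snoc_castSucc]

theorem IsFinitary.relabel {k : ℕ} {φ : InfForm L k} (h : InfForm.IsFinitary L φ) :
    ∀ {m : ℕ} (f : Fin k → Fin m), InfForm.IsFinitary L (φ.relabel f) := by
  induction h with
  | equal t₁ t₂ => exact fun f => .equal _ _
  | rel R ts => exact fun f => .rel _ _
  | not _ ih => exact fun f => .not (ih f)
  | disj hι _ ih => exact fun f => .disj hι (fun l => ih l f)
  | conj hι _ ih => exact fun f => .conj hι (fun l => ih l f)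
  | ex _ ih => exact fun f => .ex (ih _)
  | all _ ih => exact fun f => .all (ih _)

theorem isFinitary_of_isEx {m k : ℕ} {φ : InfForm L k} (h : IsEx L m φ) :
    InfForm.IsFinitary L φ := by
  refine @IsEx.rec L (fun _ _ φ _ => InfForm.IsFinitary L φ)
    (fun _ _ φ _ => InfForm.IsFinitary L φ)
    ?_ ?_ ?_ ?_ ?_ ?_ ?_ ?_ ?_ ?_ ?_ ?_ ?_ ?_ m k φ h
  · intro _ _ t₁ t₂; exact .equal t₁ t₂
  · intro _ _ _ R ts; exact .rel R ts
  · intro _ _ _ _ ih; exact .not ih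
  · intro _ _ _ hι _ _ ih; exact .disj hι ih
  · intro _ _ _ hι _ _ ih; exact .conj hι ih
  · intro _ _ _ _ _ ih; exact .ex ih
  · intro _ _ _ _ ih; exact .ex ih
  · intro _ _ t₁ t₂; exact .equal t₁ t₂
  · intro _ _ _ R ts; exact .rel R ts
  · intro _ _ _ _ ih; exact .not ih
  · intro _ _ _ hι _ _ ih; exact .disj hι ih
  · intro _ _ _ hι _ _ ih; exact .conj hι ih
  · intro _ _ _ _ _ ih; exact .all ih
  · intro _ _ _ _ ih; exact .all ih

theorem isFinitary_of_isAll {m k : ℕ} {φ : InfForm L k} (h : IsAll L m φ) :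
    InfForm.IsFinitary L φ := by
  refine @IsAll.rec L (fun _ _ φ _ => InfForm.IsFinitary L φ)
    (fun _ _ φ _ => InfForm.IsFinitary L φ)
    ?_ ?_ ?_ ?_ ?_ ?_ ?_ ?_ ?_ ?_ ?_ ?_ ?_ ?_ m k φ h
  · intro _ _ t₁ t₂; exact .equal t₁ t₂
  · intro _ _ _ R ts; exact .rel R ts
  · intro _ _ _ _ ih; exact .not ih
  · intro _ _ _ hι _ _ ih; exact .disj hι ih
  · intro _ _ _ hι _ _ ih; exact .conj hι ih
  · intro _ _ _ _ _ ih; exact .ex ih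
  · intro _ _ _ _ ih; exact .ex ih
  · intro _ _ t₁ t₂; exact .equal t₁ t₂
  · intro _ _ _ R ts; exact .rel R ts
  · intro _ _ _ _ ih; exact .not ih
  · intro _ _ _ hι _ _ ih; exact .disj hι ih
  · intro _ _ _ hι _ _ ih; exact .conj hι ih
  · intro _ _ _ _ _ ih; exact .all ih
  · intro _ _ _ _ ih; exact .all ih

theorem isFinitary_of_class {n k : ℕ} {φ : InfForm L k}
    (h : IsEx L n φ ∨ IsAll L n φ) : InfForm.IsFinitary L φ :=
  h.elim isFinitary_of_isEx isFinitary_of_isAll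

theorem not_class {n k : ℕ} {φ : InfForm L k} (h : IsEx L n φ ∨ IsAll L n φ) :
    IsEx L n φ.not ∨ IsAll L n φ.not :=
  h.elim (fun h => Or.inr (.not h)) (fun h => Or.inl (.not h))

/-- Iterated existential quantification of the last `m` variables. -/
def exs : ∀ (m : ℕ) {r : ℕ}, InfForm L (r + m) → InfForm L r
  | 0, _, φ => φ
  | m + 1, _, φ => exs m φ.ex

theorem isFinitary_exs : ∀ (m : ℕ) {r : ℕ} (φ : InfForm L (r + m)),
    InfForm.IsFinitary L φ → InfForm.IsFinitary L (exs m φ)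
  | 0, _, φ, h => h
  | m + 1, _, φ, h => isFinitary_exs m φ.ex (.ex h)

theorem realize_exs : ∀ (m : ℕ) {r : ℕ} (φ : InfForm L (r + m)) (M : Type u)
    (S : L.Structure M) (v : Fin r → M),
    Realize (exs m φ) M S v ↔ ∃ w : Fin m → M, Realize φ M S (Fin.append v w)
  | 0, _, φ, M, S, v => by
      constructor
      · intro h
        exact ⟨Fin.elim0, by rwa [Fin.append_elim0]⟩
      · rintro ⟨w, hw⟩
        rwa [Subsingleton.elim w Fin.elim0, Fin.append_elim0] at hw
  | m + 1, r, φ, M, S, v => by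
      rw [show exs (m+1) φ = exs m φ.ex from rfl, realize_exs m φ.ex M S v]
      constructor
      · rintro ⟨w, b, hb⟩
        exact ⟨Fin.snoc w b, by rwa [Fin.append_snoc]⟩
      · rintro ⟨w, hw⟩
        refine ⟨Fin.init w, w (Fin.last m), ?_⟩
        show Realize φ M S (Fin.snoc (Fin.append v (Fin.init w)) (w (Fin.last m)))
        rwa [← Fin.append_snoc, Fin.snoc_init_self]

/-- Every finitary infinitary formula is equivalent to a first-order bounded formula. -/
theorem exists_boundedFormula {k : ℕ} {φ : InfForm L k} (h : InfForm.IsFinitary L φ) :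
    ∃ F : L.BoundedFormula Empty k, ∀ (M : Type u) (S : L.Structure M) (xs : Empty → M)
      (v : Fin k → M), Realize φ M S v ↔ @BoundedFormula.Realize L M S Empty k F xs v := by
  induction h with
  | equal t₁ t₂ =>
      refine ⟨(t₁.relabel Sum.inr).bdEqual (t₂.relabel Sum.inr), fun M S xs v => ?_⟩
      letI := S
      simp only [Realize, BoundedFormula.realize_bdEqual, Term.realize_relabel]
      rw [show Sum.elim xs v ∘ Sum.inr = v from rfl]
  | rel R ts =>
      refine ⟨R.boundedFormula (fun l => (ts l).relabel Sum.inr), fun M S xs v => ?_⟩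
      letI := S
      simp only [Realize, BoundedFormula.realize_rel, Term.realize_relabel]
      rw [show Sum.elim xs v ∘ Sum.inr = v from rfl]
  | not _ ih =>
      obtain ⟨F, hF⟩ := ih
      refine ⟨F.not, fun M S xs v => ?_⟩
      letI := S
      simp only [Realize, BoundedFormula.realize_not, hF M S xs v]
  | @disj _ ι _ Φ _ ih =>
      choose F hF using ih
      haveI := Fintype.ofFinite ι
      refine ⟨BoundedFormula.iSup F, fun M S xs v => ?_⟩
      letI := S
      rw [BoundedFormula.realize_iSup]
      simp only [Realize, Finset.mem_univ, true_and]
      exact exists_congr fun l => hF l M S xs v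
  | @conj _ ι _ Φ _ ih =>
      choose F hF using ih
      haveI := Fintype.ofFinite ι
      refine ⟨BoundedFormula.iInf F, fun M S xs v => ?_⟩
      letI := S
      rw [BoundedFormula.realize_iInf]
      simp only [Realize, Finset.mem_univ, true_implies]
      exact forall_congr' fun l => hF l M S xs v
  | ex _ ih =>
      obtain ⟨F, hF⟩ := ih
      refine ⟨F.ex, fun M S xs v => ?_⟩
      letI := S
      rw [BoundedFormula.realize_ex]
      exact exists_congr fun b => hF M S xs (Fin.snoc v b)
  | all _ ih =>
      obtain ⟨F, hF⟩ := ih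
      refine ⟨F.all, fun M S xs v => ?_⟩
      letI := S
      rw [BoundedFormula.realize_all]
      exact forall_congr' fun b => hF M S xs (Fin.snoc v b)

/-- A chosen first-order equivalent of a finitary infinitary formula. -/
noncomputable def trF {k : ℕ} (φ : InfForm L k) (h : InfForm.IsFinitary L φ) :
    L.BoundedFormula Empty k :=
  (exists_boundedFormula h).choose

theorem trF_spec {k : ℕ} (φ : InfForm L k) (h : InfForm.IsFinitary L φ) (M : Type u)
    (S : L.Structure M) (xs : Empty → M) (v : Fin k → M) :
    Realize φ M S v ↔ @BoundedFormula.Realize L M S Empty k (trF φ h) xs v :=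
  (exists_boundedFormula h).choose_spec M S xs v

/-- Substituting constants into a bounded formula to form a sentence with constants. -/
noncomputable def sentOf {X : Type u} {k : ℕ} (F : L.BoundedFormula Empty k) (c : Fin k → X) :
    L[[X]].Sentence :=
  Formula.equivSentence (((F.toFormula).relabel (Sum.elim (fun e => e.elim) id)).relabel c)

theorem realize_sentOf {X : Type u} {k : ℕ} (F : L.BoundedFormula Empty k) (c : Fin k → X)
    (M : Type u) [SM : L[[X]].Structure M] :
    (sentOf F c).Realize M ↔
      @BoundedFormula.Realize L M ((L.lhomWithConstants X).reduct M) Empty k F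
        (fun e => e.elim) (fun q => ((L.con (c q) : M))) := by
  letI : L.Structure M := (L.lhomWithConstants X).reduct M
  haveI : (L.lhomWithConstants X).IsExpansionOn M := LHom.isExpansionOn_reduct _ _
  rw [sentOf, Formula.realize_equivSentence, Formula.realize_relabel, Formula.realize_relabel,
    BoundedFormula.realize_toFormula]
  rw [iff_iff_eq]
  congr 1
  funext e; exact e.elim

end Amalgam

section MainTheorem

open FirstOrder Language

/-- Amalgamation of `n`-elementary and elementary extensions: if `A ⪯ₙ B` and
`A ⪯ A′`, there is `B′` with an elementary embedding of `B` into `B′` and an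
`n`-elementary embedding of `A′` into `B′` compatible with the inclusions of `A`. -/
theorem stmt2 {L : FirstOrder.Language.{u, u}} (n : ℕ) {A B A' : Type u}
    (SA : L.Structure A) (SB : L.Structure B) (SA' : L.Structure A')
    (i : A → B) (hi : IsNElemMap L n SA SB i)
    (j : A → A') (hj : IsElemMap L SA SA' j) :
    ∃ (B' : Type u) (SB' : L.Structure B') (g : B → B') (h : A' → B'),
      IsElemMap L SB SB' g ∧ IsNElemMap L n SA' SB' h ∧
      ∀ a : A, g (i a) = h (j a) := by
  classical
  by_cases hB : Nonempty B
  case neg =>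
    -- `B` is empty, hence so are `A` and `A'`; take `B' = B`.
    rw [not_nonempty_iff] at hB
    haveI hAe : IsEmpty A := ⟨fun a => hB.false (i a)⟩
    haveI hA'e : IsEmpty A' := by
      constructor
      intro x
      have hfin : InfForm.IsFinitary L
          (InfForm.ex (L := L) (InfForm.equal (Term.var (0 : Fin 1)) (Term.var 0))) :=
        .ex (.equal _ _)
      have h0 := hj 0 _ hfin Fin.elim0
      have hx : Realize (InfForm.ex (L := L) (InfForm.equal (Term.var (0 : Fin 1)) (Term.var 0)))
          A' SA' (fun q => j (Fin.elim0 q)) := ⟨x, rfl⟩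
      obtain ⟨b, -⟩ := h0.2 hx
      exact hAe.false b
    refine ⟨B, SB, id, fun x => (hA'e.false x).elim, ?_, ?_, fun a => (hAe.false a).elim⟩
    · intro k φ _ v
      exact Iff.rfl
    · intro k φ hφ v
      cases k with
      | zero =>
        have h1 := hj 0 φ (isFinitary_of_class hφ) Fin.elim0
        have h2 := hi 0 φ hφ Fin.elim0
        have e1 : v = (fun q : Fin 0 => j (Fin.elim0 q)) := funext fun q => q.elim0
        have e2 : (fun l : Fin 0 => (fun x : A' => ((hA'e.false x).elim : B)) (v l)) =
            (fun q : Fin 0 => i (Fin.elim0 q)) := funext fun q => q.elim0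
        rw [e2, e1]
        exact h1.symm.trans h2
      | succ k => exact (hA'e.false (v 0)).elim
  case pos =>
    obtain ⟨b₀⟩ := hB
    have hjinj : Function.Injective j := by
      intro a a' haa
      exact (hj 2 (InfForm.equal (Term.var 0) (Term.var 1)) (.equal _ _) ![a, a']).2 haa
    -- the constants: elements of `B` together with elements of `A'` outside the image of `j`
    let A'' := {x : A' // ¬ ∃ a0 : A, j a0 = x}
    let X := B ⊕ A''
    let κ : A' → X := fun x =>
      if hx : ∃ a0 : A, j a0 = x then Sum.inl (i hx.choose) else Sum.inr ⟨x, hx⟩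
    -- the theory
    let T1 : L[[X]].Theory := {s | ∃ (k : ℕ) (φ : InfForm L k) (hf : InfForm.IsFinitary L φ)
      (v : Fin k → B), Realize φ B SB v ∧ s = sentOf (trF φ hf) (fun q => Sum.inl (v q))}
    let T2 : L[[X]].Theory := {s | ∃ (k : ℕ) (φ : InfForm L k)
      (hc : IsEx L n φ ∨ IsAll L n φ) (v : Fin k → A'),
      Realize φ A' SA' v ∧ s = sentOf (trF φ (isFinitary_of_class hc)) (fun q => κ (v q))}
    have hsat : (T1 ∪ T2).IsSatisfiable := by
      rw [Theory.isSatisfiable_iff_isFinitelySatisfiable]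
      intro T0 hT0
      -- choose the data of the `T2`-sentences appearing in `T0`
      let ι := {s : L[[X]].Sentence // s ∈ T0 ∧ s ∈ T2}
      haveI hι : Finite ι := Finite.of_injective
        (fun s => (⟨s.1, s.2.1⟩ : {x // x ∈ T0}))
        (fun s t hst => Subtype.ext (congrArg (fun z : {x // x ∈ T0} => z.1) hst))
      have hdat : ∀ s : ι, ∃ (k : ℕ) (φ : InfForm L k) (hc : IsEx L n φ ∨ IsAll L n φ)
          (v : Fin k → A'), Realize φ A' SA' v ∧
          s.1 = sentOf (trF φ (isFinitary_of_class hc)) (fun q => κ (v q)) := fun s => s.2.2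
      choose kd φd hcd vd hrd hsd using hdat
      -- the finite support of these sentences in `A'`
      let V : Set A' := ⋃ s : ι, Set.range (vd s)
      have hVfin : V.Finite := Set.finite_iUnion fun s => Set.finite_range _
      have hmemV : ∀ (s : ι) (l : Fin (kd s)), vd s l ∈ V := fun s l =>
        Set.mem_iUnion.2 ⟨s, ⟨l, rfl⟩⟩
      let V₁ : Set A' := V ∩ {x | ∃ a0 : A, j a0 = x}
      let V₂ : Set A' := V ∩ {x | ¬ ∃ a0 : A, j a0 = x}
      haveI f₁ : Fintype V₁ := (hVfin.subset Set.inter_subset_left).fintype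
      haveI f₂ : Fintype V₂ := (hVfin.subset Set.inter_subset_left).fintype
      let r := Fintype.card V₁
      let m := Fintype.card V₂
      let e₁ : V₁ ≃ Fin r := Fintype.equivFin _
      let e₂ : V₂ ≃ Fin m := Fintype.equivFin _
      let pre : V₁ → A := fun x => Exists.choose (show ∃ a0 : A, j a0 = ↑x from x.2.2)
      have hpre : ∀ x : V₁, j (pre x) = ↑x := fun x =>
        Exists.choose_spec (show ∃ a0 : A, j a0 = ↑x from x.2.2)
      let aEnum : Fin r → A := fun q => pre (e₁.symm q)
      let wA' : Fin m → A' := fun q => ↑(e₂.symm q)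
      let ρ : ∀ s : ι, Fin (kd s) → Fin (r + m) := fun s l =>
        if h1 : vd s l ∈ V₁ then Fin.castAdd m (e₁ ⟨vd s l, h1⟩)
        else Fin.natAdd r (e₂ ⟨vd s l, ⟨hmemV s l, fun hr => h1 ⟨hmemV s l, hr⟩⟩⟩)
      have hval : ∀ (s : ι) (l : Fin (kd s)),
          Fin.append (fun q => j (aEnum q)) wA' (ρ s l) = vd s l := by
        intro s l
        by_cases h1 : vd s l ∈ V₁
        · rw [show ρ s l = Fin.castAdd m (e₁ ⟨vd s l, h1⟩) from dif_pos h1, Fin.append_left]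
          show j (pre (e₁.symm (e₁ ⟨vd s l, h1⟩))) = vd s l
          rw [Equiv.symm_apply_apply]
          exact hpre _
        · rw [show ρ s l = Fin.natAdd r
              (e₂ ⟨vd s l, ⟨hmemV s l, fun hr => h1 ⟨hmemV s l, hr⟩⟩⟩) from dif_neg h1,
            Fin.append_right]
          show ↑(e₂.symm (e₂ ⟨vd s l, _⟩)) = vd s l
          rw [Equiv.symm_apply_apply]
      -- the conjunction of the relabelled formulas, existentially quantified
      let Χ : InfForm L (r + m) := InfForm.conj (fun s : ι => (φd s).relabel (ρ s))
      have hΧfin : InfForm.IsFinitary L (exs m Χ) := isFinitary_exs m Χ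
        (.conj hι fun s => IsFinitary.relabel (isFinitary_of_class (hcd s)) (ρ s))
      have hΧA' : Realize (exs m Χ) A' SA' (fun q => j (aEnum q)) := by
        rw [realize_exs]
        refine ⟨wA', fun s => ?_⟩
        rw [realize_relabel']
        rw [show (Fin.append (fun q => j (aEnum q)) wA') ∘ ρ s = vd s from
          funext fun l => hval s l]
        exact hrd s
      have hA : Realize (exs m Χ) A SA aEnum := (hj r (exs m Χ) hΧfin aEnum).2 hΧA'
      obtain ⟨w, hw⟩ := (realize_exs m Χ A SA aEnum).1 hA
      have hBreal : ∀ s : ι, Realize (φd s) B SB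
          (fun l => i (Fin.append aEnum w (ρ s l))) := by
        intro s
        have hws := hw s
        rw [realize_relabel'] at hws
        exact (hi (kd s) (φd s) (hcd s) (Fin.append aEnum w ∘ ρ s)).1 hws
      -- interpret the constants in `B`
      let p : X → B := Sum.elim id (fun x =>
        if h2 : (x : A') ∈ V₂ then i (w (e₂ ⟨x, h2⟩)) else b₀)
      letI : L.Structure B := SB
      letI : (Language.constantsOn X).Structure B := Language.constantsOn.structure p
      letI SBX : L[[X]].Structure B := Language.sumStructure _ _ _
      have hcon : ∀ x : X, ((L.con x : B)) = p x := fun x => rfl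
      haveI hmodB : B ⊨ (T0 : L[[X]].Theory) := by
        rw [Theory.model_iff]
        intro ψ hψ
        rcases hT0 hψ with h1 | h2
        · obtain ⟨k, φ, hf, v, hreal, rfl⟩ := h1
          rw [realize_sentOf]
          apply (trF_spec φ hf B ((L.lhomWithConstants X).reduct B) (fun e => e.elim)
            (fun q => (L.con ((Sum.inl (v q) : X)) : B))).1
          have hvv : (fun q => ((L.con ((Sum.inl (v q) : X)) : B))) = v := funext fun q => rfl
          rw [hvv]
          exact hreal
        · have hψeq : ψ = sentOf (trF (φd ⟨ψ, hψ, h2⟩)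
              (isFinitary_of_class (hcd ⟨ψ, hψ, h2⟩)))
              (fun q => κ (vd ⟨ψ, hψ, h2⟩ q)) := hsd ⟨ψ, hψ, h2⟩
          rw [hψeq, realize_sentOf]
          set s : ι := ⟨ψ, hψ, h2⟩ with hs
          apply (trF_spec (φd s) (isFinitary_of_class (hcd s)) B
            ((L.lhomWithConstants X).reduct B) (fun e => e.elim)
            (fun q => (L.con (κ (vd s q)) : B))).1
          have hvv : (fun q => ((L.con (κ (vd s q)) : B))) =
              (fun l => i (Fin.append aEnum w (ρ s l))) := by
            funext l
            rw [hcon]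
            by_cases hx : ∃ a0 : A, j a0 = vd s l
            · rw [show κ (vd s l) = Sum.inl (i hx.choose) from dif_pos hx]
              have h1 : vd s l ∈ V₁ := ⟨hmemV s l, hx⟩
              rw [show ρ s l = Fin.castAdd m (e₁ ⟨vd s l, h1⟩) from dif_pos h1,
                Fin.append_left]
              show i hx.choose = i (aEnum (e₁ ⟨vd s l, h1⟩))
              have he : aEnum (e₁ ⟨vd s l, h1⟩) = pre ⟨vd s l, h1⟩ := by
                show pre (e₁.symm (e₁ ⟨vd s l, h1⟩)) = pre ⟨vd s l, h1⟩
                rw [Equiv.symm_apply_apply]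
              rw [he]
            · rw [show κ (vd s l) = Sum.inr ⟨vd s l, hx⟩ from dif_neg hx]
              have h1 : vd s l ∉ V₁ := fun hc => hx hc.2
              have h2' : vd s l ∈ V₂ := ⟨hmemV s l, hx⟩
              show (if h2 : ((⟨vd s l, hx⟩ : A'') : A') ∈ V₂ then i (w (e₂ ⟨vd s l, h2⟩))
                else b₀) = i (Fin.append aEnum w (ρ s l))
              rw [dif_pos h2']
              rw [show ρ s l = Fin.natAdd r
                  (e₂ ⟨vd s l, ⟨hmemV s l, fun hr => h1 ⟨hmemV s l, hr⟩⟩⟩) from dif_neg h1,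
                Fin.append_right]
          rw [hvv]
          exact hBreal s
      haveI : Nonempty B := ⟨b₀⟩
      exact Theory.Model.isSatisfiable B
    -- the amalgam
    obtain ⟨MT⟩ := hsat
    letI SMX : L[[X]].Structure MT.Carrier := MT.struc
    let SM : L.Structure MT.Carrier := (L.lhomWithConstants X).reduct MT.Carrier
    have hmod : ∀ ψ ∈ T1 ∪ T2, ψ.Realize MT.Carrier := fun ψ hψ =>
      MT.is_model.realize_of_mem ψ hψ
    let cM : X → MT.Carrier := fun x => ((L.con x : MT.Carrier))
    refine ⟨MT.Carrier, SM, fun b => cM (Sum.inl b), fun x => cM (κ x), ?_, ?_, ?_⟩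
    · intro k φ hf v
      constructor
      · intro hreal
        have hm := hmod _ (Or.inl ⟨k, φ, hf, v, hreal, rfl⟩)
        rw [realize_sentOf] at hm
        exact (trF_spec φ hf MT.Carrier SM (fun e => e.elim) _).2 hm
      · intro hreal
        by_contra hnot
        have hm := hmod _ (Or.inl ⟨k, φ.not, .not hf, v, hnot, rfl⟩)
        rw [realize_sentOf] at hm
        have h3 := (trF_spec φ.not (.not hf) MT.Carrier SM (fun e => e.elim) _).2 hm
        exact h3 hreal
    · intro k φ hc v
      constructor
      · intro hreal
        have hm := hmod _ (Or.inr ⟨k, φ, hc, v, hreal, rfl⟩)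
        rw [realize_sentOf] at hm
        exact (trF_spec φ (isFinitary_of_class hc) MT.Carrier SM (fun e => e.elim) _).2 hm
      · intro hreal
        by_contra hnot
        have hm := hmod _ (Or.inr ⟨k, φ.not, not_class hc, v, hnot, rfl⟩)
        rw [realize_sentOf] at hm
        have h3 := (trF_spec φ.not (isFinitary_of_class (not_class hc)) MT.Carrier SM
          (fun e => e.elim) _).2 hm
        exact h3 hreal
    · intro a
      show cM (Sum.inl (i a)) = cM (κ (j a))
      have hx : ∃ a0 : A, j a0 = j a := ⟨a, rfl⟩
      rw [show κ (j a) = Sum.inl (i hx.choose) from dif_pos hx]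
      rw [hjinj hx.choose_spec]

end MainTheorem

end InfinitaryForcing
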